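/- Let r₁, r₂, r₃ > 0 with r₁² + r₂² + r₃² = 1, let a₁ = a₂ = −r₁²/(r₂²+r₃²), b₁ = r₁r₃/(r₂(r₂²+r₃²)), b₂ = −r₁r₂/(r₃(r₂²+r₃²)), and let r(x,y) = (r₁ e^{2πi x}, r₂ e^{2πi(a₁x+b₁y)}, r₃ e^{2πi(a₂x+b₂y)}). Set e₁ = (r₂²+r₃², 0) and e₂ = (r₃², r₂r₃/r₁) in ℝ². Then for all (x,y): r((x,y) + e₁) = e^{−2πi r₁²} · r(x,y) and r((x,y) + e₂) = e^{2πi r₃²} · r(x,y). In particular the composition of r with the Hopf projection S⁵ → ℂP² is doubly periodic with lattice of periods Λ = ℤe₁ + ℤe₂. -/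

import Mathlib

open Complex Real

lemma bloch_exp_key (A B C c : ℂ) (k : ℤ)
    (h : A = B + C + k * (2 * Real.pi * Complex.I)) :
    c * Complex.exp A = Complex.exp B * (c * Complex.exp C) := by
  rw [h, Complex.exp_add, Complex.exp_add, Complex.exp_int_mul_two_pi_mul_I]
  ring

/-- The horizontal lift `r` of the homogeneous torus `Σ_{r₁,r₂,r₃}` is a Bloch
function: translating by `e₁ = (r₂²+r₃², 0)` multiplies `r` by `e^{−2πi r₁²}`, and
translating by `e₂ = (r₃², r₂r₃/r₁)` multiplies `r` by `e^{2πi r₃²}`. Hence the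
composition with the Hopf projection is doubly periodic with lattice `ℤe₁ + ℤe₂`. -/
theorem homogeneous_torus_lift_is_bloch
    (r1 r2 r3 : ℝ) (h1 : 0 < r1) (h2 : 0 < r2) (h3 : 0 < r3)
    (hsum : r1^2 + r2^2 + r3^2 = 1)
    (a1 a2 b1 b2 : ℝ)
    (ha1 : a1 = -r1^2 / (r2^2 + r3^2))
    (ha2 : a2 = -r1^2 / (r2^2 + r3^2))
    (hb1 : b1 = r1 * r3 / (r2 * (r2^2 + r3^2)))
    (hb2 : b2 = -(r1 * r2) / (r3 * (r2^2 + r3^2)))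
    (r : ℝ → ℝ → Fin 3 → ℂ)
    (hr : ∀ x y, r x y =
      ![(r1 : ℂ) * Complex.exp (2 * Real.pi * x * Complex.I),
        (r2 : ℂ) * Complex.exp (2 * Real.pi * (a1 * x + b1 * y) * Complex.I),
        (r3 : ℂ) * Complex.exp (2 * Real.pi * (a2 * x + b2 * y) * Complex.I)])
    (e1 e2 : ℝ × ℝ)
    (he1 : e1 = (r2^2 + r3^2, 0))
    (he2 : e2 = (r3^2, r2 * r3 / r1)) :
    ∀ x y,
      r (x + e1.1) (y + e1.2) =
        Complex.exp (-(2 * Real.pi * r1^2) * Complex.I) • r x y ∧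
      r (x + e2.1) (y + e2.2) =
        Complex.exp ((2 * Real.pi * r3^2) * Complex.I) • r x y := by
  have hq : r2^2 + r3^2 ≠ 0 := by positivity
  have hr1 : r1 ≠ 0 := ne_of_gt h1
  have hq2 : r2^2 + r3^2 = 1 - r1^2 := by linarith
  have h4 : (1:ℝ) - r1^2 ≠ 0 := by rw [← hq2]; exact hq
  -- real arithmetic identities
  have Ha1 : a1 * (r2^2 + r3^2) = -r1^2 := by rw [ha1]; field_simp
  have Ha2 : a2 * (r2^2 + r3^2) = -r1^2 := by rw [ha2]; field_simp
  have HR2 : a1 * r3^2 + b1 * (r2 * r3 / r1) = r3^2 := by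
    rw [ha1, hb1, hq2]; field_simp; ring
  have HR3 : a2 * r3^2 + b2 * (r2 * r3 / r1) = r3^2 - 1 := by
    rw [ha2, hb2, hq2]; field_simp
    linear_combination (-1) * hsum
  -- complex casts
  have hsC : (r1:ℂ)^2 + (r2:ℂ)^2 + (r3:ℂ)^2 = 1 := by exact_mod_cast hsum
  have Ha1C : (a1:ℂ) * ((r2:ℂ)^2 + (r3:ℂ)^2) = -(r1:ℂ)^2 := by exact_mod_cast Ha1
  have Ha2C : (a2:ℂ) * ((r2:ℂ)^2 + (r3:ℂ)^2) = -(r1:ℂ)^2 := by exact_mod_cast Ha2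
  have HR2C : (a1:ℂ) * (r3:ℂ)^2 + (b1:ℂ) * ((r2:ℂ) * (r3:ℂ) / (r1:ℂ)) = (r3:ℂ)^2 := by
    exact_mod_cast HR2
  have HR3C : (a2:ℂ) * (r3:ℂ)^2 + (b2:ℂ) * ((r2:ℂ) * (r3:ℂ) / (r1:ℂ)) = (r3:ℂ)^2 - 1 := by
    exact_mod_cast HR3
  subst he1 he2
  intro x y
  constructor
  · rw [hr, hr]
    funext i
    fin_cases i <;>
      simp only [Matrix.cons_val_zero, Matrix.cons_val_one, Matrix.head_cons,
        Matrix.cons_val_two, Matrix.tail_cons, Pi.smul_apply, smul_eq_mul]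
    · exact bloch_exp_key _ _ _ _ 1 (by push_cast; linear_combination (2*(Real.pi:ℂ)*Complex.I) * hsC)
    · exact bloch_exp_key _ _ _ _ 0 (by push_cast; linear_combination (2*(Real.pi:ℂ)*Complex.I) * Ha1C)
    · exact bloch_exp_key _ _ _ _ 0 (by push_cast; linear_combination (2*(Real.pi:ℂ)*Complex.I) * Ha2C)
  · rw [hr, hr]
    funext i
    fin_cases i <;>
      simp only [Matrix.cons_val_zero, Matrix.cons_val_one, Matrix.head_cons,
        Matrix.cons_val_two, Matrix.tail_cons, Pi.smul_apply, smul_eq_mul]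
    · exact bloch_exp_key _ _ _ _ 0 (by push_cast; ring)
    · exact bloch_exp_key _ _ _ _ 0 (by push_cast; linear_combination (2*(Real.pi:ℂ)*Complex.I) * HR2C)
    · exact bloch_exp_key _ _ _ _ (-1) (by push_cast; linear_combination (2*(Real.pi:ℂ)*Complex.I) * HR3C)
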